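/- Let X, Y, E be finite sets with |X| = m, |Y| = n, |E| = ν, and let ∂₀ : E → X and ∂₁ : E → Y be maps (so E is the edge set of a bipartite multigraph with partite sets X and Y). Let a, b : E → ℂ satisfy Σ_{e : ∂₀(e)=x} |a(e)|² = 1 for each x ∈ X and Σ_{e : ∂₁(e)=y} |b(e)|² = 1 for each y ∈ Y. Define the ν×m matrix K by K_{e,x} = a(e) if ∂₀(e) = x and 0 otherwise, the ν×n matrix L by L_{e,y} = b(e) if ∂₁(e) = y and 0 otherwise, the unitary matrices U₀ = 2·K·K* − I_ν and U₁ = 2·L·L* − I_ν, U = U₁·U₀, and the m×m matrix Â = K*·L·L*·K. Then for every complex number u with u ≠ 1 and u ≠ −1, det(I_ν − u·U) = (1−u)^(ν−m−n) · (1+u)^(n−m) · det((1+u)²·I_m − 4u·Â), with integer (possibly negative) exponents. -/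

import Mathlib

open Matrix

/-- Columns of a weighted incidence matrix with unit-norm weight profiles are orthonormal. -/
theorem staggered_inc_orth {α E : Type*} [Fintype α] [Fintype E] [DecidableEq α] [DecidableEq E]
    (d : E → α) (a : E → ℂ)
    (ha : ∀ x : α, ∑ e ∈ Finset.univ.filter (fun e => d e = x), ‖a e‖ ^ 2 = 1)
    (K : Matrix E α ℂ) (hK : K = Matrix.of fun e x => if d e = x then a e else 0) :
    Kᴴ * K = 1 := by
  ext x x'
  simp only [Matrix.mul_apply, Matrix.conjTranspose_apply, hK, Matrix.of_apply]
  by_cases h : x = x'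
  · subst h
    rw [Matrix.one_apply_eq]
    have h1 : ∀ e : E, star (if d e = x then a e else 0) * (if d e = x then a e else 0)
        = if d e = x then ((‖a e‖ ^ 2 : ℝ) : ℂ) else 0 := by
      intro e; split_ifs with h'
      · rw [Complex.star_def, ← Complex.normSq_eq_conj_mul_self, Complex.sq_norm]
      · simp
    simp only [h1, ← Finset.sum_filter, ← Complex.ofReal_sum, ha x, Complex.ofReal_one]
  · rw [Matrix.one_apply_ne h]
    apply Finset.sum_eq_zero
    intro e _
    split_ifs with h1 h2
    · exact absurd (h1 ▸ h2) h
    all_goals simp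

/-- Theorem 4.2: characteristic polynomial of the evolution matrix of a 2-tessellable
staggered quantum walk. Here `E` is the edge set of a bipartite multigraph with partite
sets `X`, `Y` and endpoint maps `d0`, `d1`; `K` and `L` are the weighted incidence
matrices built from amplitudes `a`, `b`, `U₀ = 2 K Kᴴ - I`, `U₁ = 2 L Lᴴ - I`,
`U = U₁ U₀`, and `Â = Kᴴ L Lᴴ K`. -/
theorem staggered_two_tessellable_char_poly
    {X Y E : Type*} [Fintype X] [Fintype Y] [Fintype E]
    [DecidableEq X] [DecidableEq Y] [DecidableEq E]
    (m n ν : ℕ) (hm : Fintype.card X = m) (hn : Fintype.card Y = n)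
    (hν : Fintype.card E = ν)
    (d0 : E → X) (d1 : E → Y) (a b : E → ℂ)
    (ha : ∀ x : X, ∑ e ∈ Finset.univ.filter (fun e => d0 e = x), ‖a e‖ ^ 2 = 1)
    (hb : ∀ y : Y, ∑ e ∈ Finset.univ.filter (fun e => d1 e = y), ‖b e‖ ^ 2 = 1)
    (K : Matrix E X ℂ) (hK : K = Matrix.of fun e x => if d0 e = x then a e else 0)
    (L : Matrix E Y ℂ) (hL : L = Matrix.of fun e y => if d1 e = y then b e else 0)
    (u : ℂ) (hu1 : u ≠ 1) (hu2 : u ≠ -1) :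
    det ((1 : Matrix E E ℂ) -
        u • (((2 : ℂ) • (L * Lᴴ) - 1) * ((2 : ℂ) • (K * Kᴴ) - 1)))
      = (1 - u) ^ ((ν : ℤ) - (m : ℤ) - (n : ℤ)) * (1 + u) ^ ((n : ℤ) - (m : ℤ)) *
        det ((1 + u) ^ 2 • (1 : Matrix X X ℂ) - (4 * u) • (Kᴴ * L * Lᴴ * K)) := by
  have hv : (1 - u) ≠ 0 := sub_ne_zero.mpr (Ne.symm hu1)
  have hw : (1 + u) ≠ 0 := by
    intro h; exact hu2 (by linear_combination h)
  have hvw : (1 - u) * (1 + u) ≠ 0 := mul_ne_zero hv hw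
  have hKK : Kᴴ * K = 1 := staggered_inc_orth d0 a ha K hK
  have hLL : Lᴴ * L = 1 := staggered_inc_orth d1 b hb L hL
  have hQQ : (L * Lᴴ) * (L * Lᴴ) = L * Lᴴ := by
    rw [Matrix.mul_assoc, ← Matrix.mul_assoc Lᴴ, hLL, Matrix.one_mul]
  -- the three building blocks
  set G : Matrix E E ℂ := (1-u) • 1 + (2*u) • (L * Lᴴ) with hGdef
  set A : Matrix E E ℂ := (1+u) • 1 - (2*u) • (L * Lᴴ) with hAdef
  set S : Matrix E E ℂ := (2*u) • 1 - (4*u) • (L * Lᴴ) with hSdef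
  set W : Matrix E X ℂ := ((1-u)*(1+u))⁻¹ • (A * S * K) with hWdef
  have hGA : G * A = ((1-u)*(1+u)) • 1 := by
    rw [hGdef, hAdef]
    simp only [Matrix.mul_sub, Matrix.sub_mul, Matrix.add_mul, Matrix.mul_add,
      Matrix.smul_mul, Matrix.mul_smul, Matrix.mul_one, Matrix.one_mul, smul_smul, hQQ]
    module
  have hAS : A * S = (2*u*(1+u)) • 1 - (4*u) • (L * Lᴴ) := by
    rw [hAdef, hSdef]
    simp only [Matrix.mul_sub, Matrix.sub_mul, Matrix.smul_mul, Matrix.mul_smul,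
      Matrix.mul_one, Matrix.one_mul, smul_smul, hQQ]
    module
  have hGW : G * W = S * K := by
    rw [hWdef, Matrix.mul_smul, ← Matrix.mul_assoc, ← Matrix.mul_assoc, hGA,
      Matrix.smul_mul, Matrix.one_mul, Matrix.smul_mul, smul_smul,
      inv_mul_cancel₀ hvw, one_smul]
  have hfact : (1 : Matrix E E ℂ) -
      u • (((2 : ℂ) • (L * Lᴴ) - 1) * ((2 : ℂ) • (K * Kᴴ) - 1)) = G * (1 + W * Kᴴ) := by
    rw [Matrix.mul_add, Matrix.mul_one, ← Matrix.mul_assoc, hGW, hGdef, hSdef]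
    simp only [Matrix.mul_sub, Matrix.sub_mul, Matrix.add_mul, Matrix.mul_add,
      Matrix.smul_mul, Matrix.mul_smul, Matrix.mul_one, Matrix.one_mul, smul_smul,
      Matrix.mul_assoc]
    module
  have hKW : ((1-u)*(1+u)) • ((1 : Matrix X X ℂ) + Kᴴ * W) =
      (1 + u) ^ 2 • (1 : Matrix X X ℂ) - (4 * u) • (Kᴴ * L * Lᴴ * K) := by
    have h1 : Kᴴ * W = ((1-u)*(1+u))⁻¹ •
        ((2*u*(1+u)) • (1 : Matrix X X ℂ) - (4*u) • (Kᴴ * L * Lᴴ * K)) := by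
      rw [hWdef, Matrix.mul_smul, hAS]
      simp only [Matrix.sub_mul, Matrix.mul_sub, Matrix.smul_mul, Matrix.mul_smul,
        Matrix.one_mul, ← Matrix.mul_assoc, hKK]
    rw [h1, smul_add, smul_smul, mul_inv_cancel₀ hvw, one_smul]
    module
  have hdetKW : (((1-u)*(1+u)) ^ m) * det ((1 : Matrix X X ℂ) + Kᴴ * W) =
      det ((1 + u) ^ 2 • (1 : Matrix X X ℂ) - (4 * u) • (Kᴴ * L * Lᴴ * K)) := by
    have := congrArg det hKW
    rwa [det_smul, hm] at this
  have hdetG : det G = (1-u)^ν * ((1+u)/(1-u))^n := by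
    have hGfact : G = (1-u) • ((1 : Matrix E E ℂ) + ((2*u/(1-u)) • L) * Lᴴ) := by
      rw [hGdef, smul_add, Matrix.smul_mul, smul_smul,
        show (1-u)*(2*u/(1-u)) = 2*u from by field_simp]
    rw [hGfact, det_smul, hν, det_one_add_mul_comm, Matrix.mul_smul, hLL]
    have h2 : (1 : Matrix Y Y ℂ) + (2*u/(1-u)) • 1 = ((1+u)/(1-u)) • (1 : Matrix Y Y ℂ) := by
      rw [show ((1+u)/(1-u)) = 1 + 2*u/(1-u) from by field_simp; ring, add_smul, one_smul]
    rw [h2, det_smul, hn, det_one]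
    ring
  -- assemble
  rw [hfact, det_mul, det_one_add_mul_comm, hdetG, ← hdetKW]
  have hz1 : (1-u) ^ ((ν:ℤ) - (m:ℤ) - (n:ℤ)) = (1-u)^ν / ((1-u)^m * (1-u)^n) := by
    rw [zpow_sub₀ hv, zpow_sub₀ hv, zpow_natCast, zpow_natCast, zpow_natCast, div_div]
  have hz2 : (1+u) ^ ((n:ℤ) - (m:ℤ)) = (1+u)^n / (1+u)^m := by
    rw [zpow_sub₀ hw, zpow_natCast, zpow_natCast]
  rw [hz1, hz2, div_pow]
  field_simp
  rw [mul_pow]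
  ring
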